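/- If λ^κ = λ for infinite cardinals κ ≤ λ, then there exists a κ⁺-independent family F ⊆ ^λκ of cardinality 2^λ; i.e., |F| = 2^λ and for every subfamily F₀ of size ≤ κ and every φ : F₀ → κ there is x ∈ λ with f(x) = φ(f) for all f ∈ F₀. -/

import Mathlib

open Cardinal Order

/-- The cofinality of the everywhere (pointwise) domination order on functions `X → K`. -/
noncomputable def everyCof (X K : Type*) [LE K] : Cardinal :=
  sInf {c | ∃ D : Set (X → K), #D = c ∧ ∀ f : X → K, ∃ g ∈ D, ∀ x, f x ≤ g x}

/-- The cofinality of the eventual domination order on functions `X → K`. -/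
noncomputable def evenCof (X K : Type*) [LE X] [LE K] : Cardinal :=
  sInf {c | ∃ D : Set (X → K), #D = c ∧
    ∀ f : X → K, ∃ g ∈ D, ∃ a : X, ∀ b : X, a ≤ b → f b ≤ g b}

open Classical in
noncomputable def ekF {K : Type u} {L : Type u} (k0 : K) (A : Set L)
    (d : (K → L) × (K → Set K) × (K → K)) : K :=
  if h : ∃ i, {j | d.1 j ∈ A} = d.2.1 i then d.2.2 h.choose else k0

lemma ekF_eq {K L : Type u} (k0 : K) (A : Set L) (d : (K → L) × (K → Set K) × (K → K))
    {i : K} (hi : {j | d.1 j ∈ A} = d.2.1 i)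
    (hc : ∀ i', d.2.1 i' = d.2.1 i → d.2.2 i' = d.2.2 i) : ekF k0 A d = d.2.2 i := by
  have h : ∃ i, {j | d.1 j ∈ A} = d.2.1 i := ⟨i, hi⟩
  rw [ekF, dif_pos h]
  exact hc _ (h.choose_spec.symm.trans hi)

lemma ekF_ne {K L : Type u} [Nonempty K] {k0 k1 : K} (h01 : k0 ≠ k1) {A B : Set L}
    {x : L} (hxA : x ∈ A) (hxB : x ∉ B) : ekF k0 A ≠ ekF k0 B := by
  intro hAB
  set d : (K → L) × (K → Set K) × (K → K) :=
    (fun _ => x, fun _ => Set.univ, fun _ => k1) with hd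
  have hA : ekF k0 A d = k1 := by
    refine ekF_eq k0 A d (i := Classical.arbitrary K) ?_ (fun _ _ => rfl)
    exact Set.eq_univ_of_forall fun j => hxA
  have hB : ekF k0 B d = k0 := by
    rw [ekF, dif_neg]
    rintro ⟨i, hi⟩
    have : (Classical.arbitrary K) ∈ ({j | d.1 j ∈ B} : Set K) := hi ▸ Set.mem_univ _
    exact hxB this
  rw [hAB] at hA
  exact h01 (hB.symm.trans hA)

lemma ekF_injective {K L : Type u} [Nonempty K] {k0 k1 : K} (h01 : k0 ≠ k1) :
    Function.Injective (fun A : Set L => ekF k0 A) := by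
  intro A B hAB
  by_contra hne
  obtain ⟨x, hx⟩ : ∃ x, ¬ (x ∈ A ↔ x ∈ B) := by
    by_contra hx; push_neg at hx
    exact hne (Set.ext fun x => hx x)
  by_cases hxA : x ∈ A
  · exact ekF_ne h01 hxA (fun hxB => hx ⟨fun _ => hxB, fun _ => hxA⟩) hAB
  · exact ekF_ne h01 (show x ∈ B by by_contra hxB; exact hx ⟨fun a => absurd a hxA, fun b => absurd b hxB⟩)
      hxA hAB.symm

lemma ekF_hit {K L : Type u} [Nonempty L] (k0 : K) (pr : K → K × K)
    (hpr : Function.Surjective pr) (A : K → Set L) (c : K → K)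
    (hc : ∀ i j, A i = A j → c i = c j) :
    ∃ d, ∀ i, ekF k0 (A i) d = c i := by
  classical
  have hsep : ∀ m : K, ∃ x : L, A (pr m).1 ≠ A (pr m).2 → ¬ (x ∈ A (pr m).1 ↔ x ∈ A (pr m).2) := by
    intro m
    by_cases hne : A (pr m).1 = A (pr m).2
    · exact ⟨Classical.arbitrary L, fun h => absurd hne h⟩
    · obtain ⟨x, hx⟩ : ∃ x, ¬ (x ∈ A (pr m).1 ↔ x ∈ A (pr m).2) := by
        by_contra hx; push_neg at hx
        exact hne (Set.ext fun x => hx x)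
      exact ⟨x, fun _ => hx⟩
  choose e he using hsep
  set d : (K → L) × (K → Set K) × (K → K) :=
    (e, fun i => {j | e j ∈ A i}, c) with hd
  have key : ∀ i i', ({j | e j ∈ A i'} : Set K) = {j | e j ∈ A i} → A i' = A i := by
    intro i i' hii
    by_contra hne
    obtain ⟨m, hm⟩ := hpr (i', i)
    have h1 : A (pr m).1 ≠ A (pr m).2 := by rw [hm]; exact hne
    have := he m h1
    rw [hm] at this
    have hmem : e m ∈ A i' ↔ e m ∈ A i := by
      constructor
      · intro hh; exact (hii ▸ (show m ∈ ({j | e j ∈ A i'} : Set K) from hh) : m ∈ {j | e j ∈ A i})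
      · intro hh; exact (hii.symm ▸ (show m ∈ ({j | e j ∈ A i} : Set K) from hh) : m ∈ {j | e j ∈ A i'})
    exact this hmem
  refine ⟨d, fun i => ?_⟩
  refine ekF_eq k0 (A i) d (i := i) rfl ?_
  intro i' hii
  exact hc i' i (key i i' hii)


theorem stmt_9 (k l : Cardinal) (hk : ℵ₀ ≤ k) (hl : ℵ₀ ≤ l) (h : l ^ k = l) :
    ∃ F : Set (l.ord.ToType → k.ord.ToType), #F = 2 ^ l ∧
      ∀ F₀ ⊆ F, #F₀ ≤ k →
        ∀ φ : F₀ → k.ord.ToType, ∃ x : l.ord.ToType,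
          ∀ f : F₀, (f : l.ord.ToType → k.ord.ToType) x = φ f := by
  classical
  set K := k.ord.ToType with hK
  set L := l.ord.ToType with hL
  have hmkK : #K = k := Cardinal.mk_ord_toType k
  have hmkL : #L = l := Cardinal.mk_ord_toType l
  have hkl : k ≤ l := le_of_lt (lt_of_lt_of_le (Cardinal.cantor k)
    (h ▸ Cardinal.power_le_power_right (le_trans (by exact_mod_cast (Cardinal.nat_lt_aleph0 2).le) hl)))
  have h2k : (2 : Cardinal) ^ k ≤ l := h ▸ Cardinal.power_le_power_right (le_trans (by exact_mod_cast (Cardinal.nat_lt_aleph0 2).le) hl)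
  have hkk : k ^ k ≤ l := h ▸ Cardinal.power_le_power_right hkl
  haveI : Nonempty K := by
    rw [← Cardinal.mk_ne_zero_iff, hmkK]; exact (lt_of_lt_of_le aleph0_pos hk).ne'
  haveI : Nonempty L := by
    rw [← Cardinal.mk_ne_zero_iff, hmkL]; exact (lt_of_lt_of_le aleph0_pos hl).ne'
  -- cardinality of the auxiliary domain
  have hD : #((K → L) × (K → Set K) × (K → K)) = l := by
    have h1 : #(K → L) = l ^ k := by rw [← hmkK, ← hmkL]; simp [Cardinal.mk_arrow]
    have h2 : #(K → Set K) = (2 ^ k) ^ k := by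
      rw [← hmkK]; simp [Cardinal.mk_arrow, Cardinal.mk_set]
    have h3 : #(K → K) = k ^ k := by rw [← hmkK]; simp [Cardinal.mk_arrow]
    have h22 : ((2 : Cardinal) ^ k) ^ k = 2 ^ k := by
      rw [← Cardinal.power_mul, Cardinal.mul_eq_self hk]
    rw [Cardinal.mk_prod, Cardinal.mk_prod]
    simp only [Cardinal.lift_id, h1, h2, h3, h22, h]
    apply le_antisymm
    · calc l * (2 ^ k * k ^ k) ≤ l * (l * l) := by
            exact mul_le_mul_right (mul_le_mul' h2k hkk) l
        _ = l := by rw [Cardinal.mul_eq_self hl, Cardinal.mul_eq_self hl]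
    · conv_lhs => rw [← mul_one l]
      refine mul_le_mul_right ?_ l
      refine Cardinal.one_le_iff_ne_zero.mpr ?_
      exact mul_ne_zero (Cardinal.power_ne_zero _ two_ne_zero)
        (Cardinal.power_ne_zero _ (lt_of_lt_of_le aleph0_pos hk).ne')
  -- nontriviality of K
  haveI : Nontrivial K := by
    rw [← Cardinal.one_lt_iff_nontrivial, hmkK]
    exact lt_of_lt_of_le Cardinal.one_lt_aleph0 hk
  obtain ⟨k0, k1, h01⟩ := exists_pair_ne K
  -- pairing surjection K → K × K
  obtain ⟨pe⟩ : Nonempty (K ≃ K × K) := by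
    rw [← Cardinal.eq, Cardinal.mk_prod, Cardinal.lift_id, hmkK, Cardinal.mul_eq_self hk]
  have hpr : Function.Surjective (⇑pe) := pe.surjective
  -- identification of L with the auxiliary domain
  obtain ⟨ee⟩ : Nonempty (L ≃ (K → L) × (K → Set K) × (K → K)) := by
    rw [← Cardinal.eq, hD, hmkL]
  set G : Set L → (L → K) := fun A => ekF k0 A ∘ ⇑ee with hG
  have hGinj : Function.Injective G := by
    intro A B hAB
    refine ekF_injective (k1 := k1) h01 (funext fun d => ?_)
    have := congrFun hAB (ee.symm d)
    simpa [hG, Function.comp] using this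
  refine ⟨Set.range G, ?_, ?_⟩
  · rw [Cardinal.mk_range_eq _ hGinj, Cardinal.mk_set, hmkL]
  intro F₀ hsub hcard φ
  rcases isEmpty_or_nonempty F₀ with hE | hNE
  · exact ⟨Classical.arbitrary L, fun f => (hE.false f).elim⟩
  obtain ⟨emb⟩ : Nonempty (F₀ ↪ K) := by
    rw [← Cardinal.le_def, hmkK]; exact hcard
  set g : K → F₀ := Function.invFun ⇑emb with hg
  have hgsurj : Function.Surjective g := Function.invFun_surjective emb.injective
  have hex : ∀ i : K, ∃ A : Set L, G A = (g i : L → K) := fun i => hsub (g i).2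
  choose A hA using hex
  have hc : ∀ i j, A i = A j → φ (g i) = φ (g j) := by
    intro i j hij
    have : (g i : L → K) = (g j : L → K) := by rw [← hA i, ← hA j, hij]
    rw [Subtype.coe_injective this]
  obtain ⟨d, hd⟩ := ekF_hit k0 (⇑pe) hpr A (fun i => φ (g i)) hc
  refine ⟨ee.symm d, fun f => ?_⟩
  obtain ⟨i, hi⟩ := hgsurj f
  have h1 : (f : L → K) (ee.symm d) = ekF k0 (A i) d := by
    rw [← hi, ← hA i]
    simp [hG]
  rw [h1, hd i, hi]
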